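/- Bayes: for events E, H, A with P(A∩H) > 0, the conjunction satisfies ⟦(E|(A∩H))∧(H|A)⟧(ω) = ⟦(E∩H)|A⟧(ω) for every ω ∈ Ω; moreover, if P(A∩E∩H) > 0, then the iterated conditional satisfies ⟦(H|(E∩A))|((E∩H)|A)⟧(ω) = 1 for every ω ∈ Ω. -/

import Mathlib

open MeasureTheory Set
open scoped Classical

noncomputable section

variable {Ω : Type*} [MeasurableSpace Ω]

/-- Indicator (with values in `ℝ`) of a set. -/
def ind (A : Set Ω) : Ω → ℝ := A.indicator 1

/-- Conditional probability `P(A|H) = P(A ∩ H)/P(H)`. -/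
def condProb (P : Measure Ω) (A H : Set Ω) : ℝ :=
  (P (A ∩ H)).toReal / (P H).toReal

/-- The (indicator of the) conditional event `A|H`,
`⟦A|H⟧ = 1_{A∩H} + P(A|H)·1_{Hᶜ}`. -/
def condEvent (P : Measure Ω) (A H : Set Ω) : Ω → ℝ :=
  fun ω => ind (A ∩ H) ω + condProb P A H * ind Hᶜ ω

/-- The prevision `z` of the conjunction `(A|H) ∧ (B|K)`:
`z = E[min(⟦A|H⟧, ⟦B|K⟧)·1_{H∪K}]/P(H∪K)`. -/
def conjPrev (P : Measure Ω) (A H B K : Set Ω) : ℝ :=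
  (∫ ω, min (condEvent P A H ω) (condEvent P B K ω) * ind (H ∪ K) ω ∂P) /
    (P (H ∪ K)).toReal

/-- The conjunction `⟦(A|H) ∧ (B|K)⟧ = min(⟦A|H⟧, ⟦B|K⟧)·1_{H∪K} + z·1_{(H∪K)ᶜ}`. -/
def conjCE (P : Measure Ω) (A H B K : Set Ω) : Ω → ℝ :=
  fun ω => min (condEvent P A H ω) (condEvent P B K ω) * ind (H ∪ K) ω
    + conjPrev P A H B K * ind (H ∪ K)ᶜ ω

/-- The iterated conditional `⟦(B|K)|(A|H)⟧ = ⟦(A|H)∧(B|K)⟧ + μ·(1 − ⟦A|H⟧)`,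
with `μ = z / P(A|H)`. -/
def iterCond (P : Measure Ω) (A H B K : Set Ω) : Ω → ℝ :=
  fun ω => conjCE P A H B K ω +
    (conjPrev P A H B K / condProb P A H) * (1 - condEvent P A H ω)

/-- Goodman–Nguyen logical implication between conditional events:
`A|H ⊑ B|K` iff `A∩H ⊆ B∩K` and `Bᶜ∩K ⊆ Aᶜ∩H`. -/
def GNle (A H B K : Set Ω) : Prop := A ∩ H ⊆ B ∩ K ∧ Bᶜ ∩ K ⊆ Aᶜ ∩ H

lemma ind_apply (S : Set Ω) (ω : Ω) : ind S ω = if ω ∈ S then 1 else 0 := by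
  simp [ind, Set.indicator_apply]

lemma ind_nonneg (S : Set Ω) (ω : Ω) : 0 ≤ ind S ω := by
  rw [ind_apply]; split <;> norm_num

lemma condProb_nonneg (P : Measure Ω) (A H : Set Ω) : 0 ≤ condProb P A H :=
  div_nonneg ENNReal.toReal_nonneg ENNReal.toReal_nonneg

lemma condEvent_nonneg (P : Measure Ω) (A H : Set Ω) (ω : Ω) : 0 ≤ condEvent P A H ω :=
  add_nonneg (ind_nonneg _ _) (mul_nonneg (condProb_nonneg _ _ _) (ind_nonneg _ _))

lemma integral_ind (P : Measure Ω) [IsProbabilityMeasure P] {S : Set Ω}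
    (hS : MeasurableSet S) : ∫ ω, ind S ω ∂P = (P S).toReal := by
  simp [ind, MeasureTheory.integral_indicator_one hS, Measure.real]

lemma key1 (P : Measure Ω) (E H A : Set Ω) (ω : Ω) :
    min (condEvent P E (A ∩ H) ω) (condEvent P H A ω) * ind ((A ∩ H) ∪ A) ω
      = ind ((E ∩ H) ∩ A) ω := by
  by_cases hA : ω ∈ A
  · by_cases hH : ω ∈ H
    · by_cases hE : ω ∈ E
      · simp [condEvent, ind_apply, hA, hH, hE, condProb]
      · simp [condEvent, ind_apply, hA, hH, hE]
    · have h2 : condEvent P H A ω = 0 := by simp [condEvent, ind_apply, hA, hH]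
      rw [h2, min_eq_right (condEvent_nonneg P E (A ∩ H) ω)]
      simp [ind_apply, hA, hH]
  · simp [ind_apply, hA]

lemma key2 (P : Measure Ω) (E H A : Set Ω) (ω : Ω) :
    min (condEvent P (E ∩ H) A ω) (condEvent P H (E ∩ A) ω) * ind (A ∪ (E ∩ A)) ω
      = ind ((E ∩ H) ∩ A) ω := by
  by_cases hA : ω ∈ A
  · by_cases hEH : ω ∈ E ∩ H
    · simp [condEvent, ind_apply, hA, hEH, hEH.1, hEH.2]
    · have h1 : condEvent P (E ∩ H) A ω = 0 := by simp [condEvent, ind_apply, hA, hEH]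
      rw [h1, min_eq_left (condEvent_nonneg P H (E ∩ A) ω)]
      simp [ind_apply, hA, hEH]
  · simp [ind_apply, hA, fun h : ω ∈ E ∩ A => hA h.2]

/-- Bayes: `⟦(E|(A∩H))∧(H|A)⟧ = ⟦(E∩H)|A⟧` pointwise; moreover, if
`P(A∩E∩H) > 0`, then `⟦(H|(E∩A))|((E∩H)|A)⟧` is constantly `1`. -/
theorem bayes_rule (P : Measure Ω) [IsProbabilityMeasure P]
    (E H A : Set Ω)
    (hEm : MeasurableSet E) (hHm : MeasurableSet H) (hAm : MeasurableSet A)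
    (hAH : 0 < P (A ∩ H)) :
    (∀ ω, conjCE P E (A ∩ H) H A ω = condEvent P (E ∩ H) A ω) ∧
      (0 < P (A ∩ E ∩ H) → ∀ ω, iterCond P (E ∩ H) A H (E ∩ A) ω = 1) := by
  have hSm : MeasurableSet ((E ∩ H) ∩ A) := (hEm.inter hHm).inter hAm
  have hU1 : (A ∩ H) ∪ A = A := Set.union_eq_self_of_subset_left Set.inter_subset_left
  have hU2 : A ∪ (E ∩ A) = A := Set.union_eq_self_of_subset_right Set.inter_subset_right
  have hprev1 : conjPrev P E (A ∩ H) H A = condProb P (E ∩ H) A := by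
    unfold conjPrev
    rw [show (∫ ω, min (condEvent P E (A ∩ H) ω) (condEvent P H A ω)
        * ind ((A ∩ H) ∪ A) ω ∂P) = ∫ ω, ind ((E ∩ H) ∩ A) ω ∂P from
      integral_congr_ae (Filter.Eventually.of_forall (key1 P E H A)),
      integral_ind P hSm, hU1, condProb]
  have hprev2 : conjPrev P (E ∩ H) A H (E ∩ A) = condProb P (E ∩ H) A := by
    unfold conjPrev
    rw [show (∫ ω, min (condEvent P (E ∩ H) A ω) (condEvent P H (E ∩ A) ω)
        * ind (A ∪ (E ∩ A)) ω ∂P) = ∫ ω, ind ((E ∩ H) ∩ A) ω ∂P from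
      integral_congr_ae (Filter.Eventually.of_forall (key2 P E H A)),
      integral_ind P hSm, hU2, condProb]
  constructor
  · intro ω
    show min (condEvent P E (A ∩ H) ω) (condEvent P H A ω) * ind ((A ∩ H) ∪ A) ω
      + conjPrev P E (A ∩ H) H A * ind ((A ∩ H) ∪ A)ᶜ ω = _
    rw [key1, hprev1, hU1]
    rfl
  · intro hpos ω
    have hset : (E ∩ H) ∩ A = A ∩ E ∩ H := by ext x; simp; tauto
    have hPA : 0 < (P A).toReal :=
      ENNReal.toReal_pos (fun h => by
        have := lt_of_lt_of_le hAH (measure_mono Set.inter_subset_left)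
        simp [h] at this) (measure_ne_top P A)
    have hc : 0 < condProb P (E ∩ H) A := by
      apply div_pos _ hPA
      rw [hset]
      exact ENNReal.toReal_pos hpos.ne' (measure_ne_top P _)
    have hCE : conjCE P (E ∩ H) A H (E ∩ A) ω = condEvent P (E ∩ H) A ω := by
      show min (condEvent P (E ∩ H) A ω) (condEvent P H (E ∩ A) ω) * ind (A ∪ (E ∩ A)) ω
        + conjPrev P (E ∩ H) A H (E ∩ A) * ind (A ∪ (E ∩ A))ᶜ ω = _
      rw [key2, hprev2, hU2]
      rfl
    show conjCE P (E ∩ H) A H (E ∩ A) ω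
      + (conjPrev P (E ∩ H) A H (E ∩ A) / condProb P (E ∩ H) A)
        * (1 - condEvent P (E ∩ H) A ω) = 1
    rw [hCE, hprev2, div_self hc.ne']
    ring

end
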